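/- Let $\gamma \in (0,1]$, $\beta := \frac{2}{2-\gamma}$, and let $U \in C^2((R,\infty))$ be a positive solution of $U'' + \big(\frac{n-1}{r} + \frac{r}{2}\big)U' - \frac{\beta}{2} U = \gamma U^{\gamma-1}$ on $(R, \infty)$ with $U(r) \to 0$ and $U'(r) \to 0$ as $r \downarrow R$, and $U, U' > 0$ on $(R,\infty)$. Then $\lim_{r \to \infty} U(r) = \infty$. -/

import Mathlib

open Set Filter Real

set_option maxHeartbeats 1000000

theorem stmt13 (n : ℕ) (hn : 1 ≤ n) (R γ β : ℝ) (hR : 0 < R)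
    (hγ0 : 0 < γ) (hγ1 : γ ≤ 1) (hβ : β = 2 / (2 - γ)) (U : ℝ → ℝ)
    (hC2 : ContDiffOn ℝ 2 U (Set.Ioi R))
    (heq : ∀ r ∈ Set.Ioi R,
      deriv (deriv U) r + (((n : ℝ) - 1) / r + r / 2) * deriv U r - β / 2 * U r
        = γ * U r ^ (γ - 1))
    (hU0 : Filter.Tendsto U (nhdsWithin R (Set.Ioi R)) (nhds 0))
    (hU'0 : Filter.Tendsto (deriv U) (nhdsWithin R (Set.Ioi R)) (nhds 0))
    (hUpos : ∀ r ∈ Set.Ioi R, 0 < U r)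
    (hU'pos : ∀ r ∈ Set.Ioi R, 0 < deriv U r) :
    Filter.Tendsto U Filter.atTop Filter.atTop := by
  -- differentiability facts
  have hd1 : ∀ r ∈ Set.Ioi R, HasDerivAt U (deriv U r) r := by
    intro r hr
    exact ((hC2.differentiableOn (by norm_num)).differentiableAt
      (isOpen_Ioi.mem_nhds hr)).hasDerivAt
  have hC1' : ContDiffOn ℝ 1 (deriv U) (Set.Ioi R) :=
    hC2.deriv_of_isOpen isOpen_Ioi (by norm_num)
  have hd2 : ∀ r ∈ Set.Ioi R, HasDerivAt (deriv U) (deriv (deriv U) r) r := by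
    intro r hr
    exact ((hC1'.differentiableOn (by norm_num)).differentiableAt
      (isOpen_Ioi.mem_nhds hr)).hasDerivAt
  -- U monotone on Ioi R
  have hmono : MonotoneOn U (Set.Ioi R) := by
    apply monotoneOn_of_deriv_nonneg (convex_Ioi R) hC2.continuousOn
    · intro x hx; rw [interior_Ioi] at hx
      exact (hd1 x hx).differentiableAt.differentiableWithinAt
    · intro x hx; rw [interior_Ioi] at hx; exact (hU'pos x hx).le
  by_contra hT
  -- boundedness
  obtain ⟨M, hM⟩ : ∃ M, ∀ r ∈ Set.Ioi R, U r ≤ M := by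
    by_contra h
    push_neg at h
    apply hT
    rw [tendsto_atTop]
    intro b
    obtain ⟨r0, hr0, hb⟩ := h b
    rw [eventually_atTop]
    exact ⟨r0, fun r hr => hb.le.trans (hmono hr0 (lt_of_lt_of_le hr0 hr) hr)⟩
  have hMpos : 0 < M :=
    lt_of_lt_of_le (hUpos (R + 1) (by simp [lt_add_of_pos_right R one_pos]))
      (hM (R + 1) (by simp [lt_add_of_pos_right R one_pos]))
  set c := γ * M ^ (γ - 1) with hc_def
  have hc : 0 < c := mul_pos hγ0 (Real.rpow_pos_of_pos hMpos _)
  have hβpos : 0 < β := by rw [hβ]; exact div_pos two_pos (by linarith)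
  -- ODE inequality
  have hineq : ∀ r ∈ Set.Ioi R,
      c ≤ deriv (deriv U) r + (((n : ℝ) - 1) / r + r / 2) * deriv U r := by
    intro r hr
    have h1 : c ≤ γ * U r ^ (γ - 1) :=
      mul_le_mul_of_nonneg_left
        (Real.rpow_le_rpow_of_nonpos (hUpos r hr) (hM r hr) (by linarith)) hγ0.le
    have h2 := heq r hr
    have h3 : 0 ≤ β / 2 * U r := mul_nonneg (by linarith) (hUpos r hr).le
    nlinarith [hUpos r hr]
  -- key increment lemma
  have key : ∀ a : ℝ, max (R + 2) ((n : ℝ) + 2) ≤ a → U a + c / 4 ≤ U (2 * a) := by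
    intro a ha
    have haR : R + 2 ≤ a := le_trans (le_max_left _ _) ha
    have han : (n : ℝ) + 2 ≤ a := le_trans (le_max_right _ _) ha
    have ha1 : (1 : ℝ) ≤ a := by linarith
    have haR' : R < a := by linarith
    set A := a + (n : ℝ) with hA_def
    have hA1 : (1 : ℝ) ≤ A := by
      have : (0 : ℝ) ≤ n := Nat.cast_nonneg n
      simp only [hA_def]; linarith
    have hApos : (0 : ℝ) < A := by linarith
    have hsub : Set.Icc a (2 * a) ⊆ Set.Ioi R := fun r hr => lt_of_lt_of_le haR' hr.1
    set F := fun r : ℝ => Real.exp (A * r) * (deriv U r - c / A) with hF_def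
    have hFd : ∀ r ∈ Set.Ioi R, HasDerivAt F
        (Real.exp (A * r) * (deriv (deriv U) r + A * deriv U r - c)) r := by
      intro r hr
      have h1 : HasDerivAt (fun r : ℝ => Real.exp (A * r)) (Real.exp (A * r) * A) r := by
        exact ((Real.hasDerivAt_exp (A * r)).comp r ((hasDerivAt_id r).const_mul A)).congr_deriv (by simp)
      have h2 : HasDerivAt (fun r => deriv U r - c / A) (deriv (deriv U) r) r :=
        (hd2 r hr).sub_const (c / A)
      have := h1.mul h2
      refine this.congr_deriv ?_
      have hcA : A * (c / A) = c := by field_simp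
      linear_combination (-Real.exp (A * r)) * hcA
    have hFmono : MonotoneOn F (Set.Icc a (2 * a)) := by
      apply monotoneOn_of_deriv_nonneg (convex_Icc _ _)
      · exact fun r hr => (hFd r (hsub hr)).continuousAt.continuousWithinAt
      · intro r hr
        rw [interior_Icc] at hr
        exact (hFd r (hsub (Set.mem_Icc_of_Ioo hr))).differentiableAt.differentiableWithinAt
      · intro r hr
        rw [interior_Icc] at hr
        have hrI : r ∈ Set.Ioi R := hsub (Set.mem_Icc_of_Ioo hr)
        rw [(hFd r hrI).deriv]
        have hexp : 0 ≤ Real.exp (A * r) := (Real.exp_pos _).le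
        have hco : ((n : ℝ) - 1) / r + r / 2 ≤ A := by
          have hr1 : (1 : ℝ) ≤ r := le_trans ha1 hr.1.le
          have h1 : ((n : ℝ) - 1) / r ≤ (n : ℝ) - 1 := by
            apply div_le_self _ hr1
            have : (1 : ℝ) ≤ n := by exact_mod_cast hn
            linarith
          have h2 : r / 2 ≤ a := by linarith [hr.2.le]
          simp only [hA_def]; linarith
        have h3 := hineq r hrI
        have h4 := (hU'pos r hrI).le
        apply mul_nonneg hexp
        nlinarith
    -- lower bound on U' on [a+1, 2a]
    have hU'lb : ∀ r ∈ Set.Icc (a + 1) (2 * a), c / (2 * A) ≤ deriv U r := by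
      intro r hr
      have hra : a + 1 ≤ r := hr.1
      have hrIcc : r ∈ Set.Icc a (2 * a) := ⟨by linarith, hr.2⟩
      have hrI : r ∈ Set.Ioi R := hsub hrIcc
      have haIcc : a ∈ Set.Icc a (2 * a) := ⟨le_refl a, by linarith⟩
      have hFle : F a ≤ F r := hFmono haIcc hrIcc (by linarith)
      have hFa : -(Real.exp (A * a) * (c / A)) ≤ F a := by
        have := (hU'pos a (hsub haIcc)).le
        simp only [hF_def]
        nlinarith [Real.exp_pos (A * a)]
      -- exp (A*r) ≥ 2 * exp (A*a)
      have hexp2 : 2 * Real.exp (A * a) ≤ Real.exp (A * r) := by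
        have h2e : (2 : ℝ) ≤ Real.exp 1 := by
          have := Real.add_one_le_exp 1
          linarith
        have h1 : A * a + 1 ≤ A * r := by nlinarith
        calc 2 * Real.exp (A * a) ≤ Real.exp 1 * Real.exp (A * a) := by
              nlinarith [Real.exp_pos (A * a)]
          _ = Real.exp (A * a + 1) := by rw [← Real.exp_add]; ring_nf
          _ ≤ Real.exp (A * r) := Real.exp_le_exp.2 h1
      have hexpr : 0 < Real.exp (A * r) := Real.exp_pos _
      have hcA : 0 < c / A := div_pos hc hApos
      -- F r ≥ -(exp (A*a) * (c/A)) ≥ -(exp (A*r) * (c/(2A)))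
      have h5 : -(Real.exp (A * r) * (c / (2 * A))) ≤ F r := by
        have : -(Real.exp (A * r) * (c / (2 * A))) ≤ -(Real.exp (A * a) * (c / A)) := by
          rw [neg_le_neg_iff]
          have hA0 : A ≠ 0 := by linarith
          have heq3 : Real.exp (A * r) * (c / (2 * A)) = Real.exp (A * r) / 2 * (c / A) := by
            field_simp
          rw [heq3]
          exact mul_le_mul_of_nonneg_right (by linarith) hcA.le
        linarith [hFle, hFa]
      simp only [hF_def] at h5
      have h6 : deriv U r - c / A ≥ -(c / (2 * A)) := by
        by_contra h7
        push_neg at h7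
        nlinarith
      have : c / A - c / (2 * A) = c / (2 * A) := by field_simp; ring
      linarith
    -- integrate the lower bound
    have hGmono : MonotoneOn (fun r => U r - c / (2 * A) * r) (Set.Icc (a + 1) (2 * a)) := by
      have hsub2 : Set.Icc (a + 1) (2 * a) ⊆ Set.Ioi R := fun r hr =>
        lt_of_lt_of_le haR' (le_trans (by linarith) hr.1)
      have hGd : ∀ r ∈ Set.Ioi R,
          HasDerivAt (fun r => U r - c / (2 * A) * r) (deriv U r - c / (2 * A)) r := by
        intro r hr
        exact ((hd1 r hr).sub ((hasDerivAt_id r).const_mul (c / (2 * A)))).congr_deriv (by simp)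
      apply monotoneOn_of_deriv_nonneg (convex_Icc _ _)
      · exact fun r hr => (hGd r (hsub2 hr)).continuousAt.continuousWithinAt
      · intro r hr
        rw [interior_Icc] at hr
        exact (hGd r (hsub2 (Set.mem_Icc_of_Ioo hr))).differentiableAt.differentiableWithinAt
      · intro r hr
        rw [interior_Icc] at hr
        rw [(hGd r (hsub2 (Set.mem_Icc_of_Ioo hr))).deriv]
        linarith [hU'lb r (Set.mem_Icc_of_Ioo hr)]
    have h8 : U (a + 1) - c / (2 * A) * (a + 1) ≤ U (2 * a) - c / (2 * A) * (2 * a) :=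
      hGmono ⟨le_refl _, by linarith⟩ ⟨by linarith, le_refl _⟩ (by linarith)
    have h9 : U a ≤ U (a + 1) :=
      hmono (by simp only [Set.mem_Ioi]; linarith) (by simp only [Set.mem_Ioi]; linarith)
        (by linarith)
    -- c/(2A) * (a - 1) ≥ c/4 since a ≥ n + 2
    have h10 : c / 4 ≤ c / (2 * A) * (a - 1) := by
      rw [div_mul_eq_mul_div, div_le_div_iff₀ (by norm_num) (by linarith)]
      have : (0 : ℝ) ≤ n := Nat.cast_nonneg n
      nlinarith
    linarith
  -- iterate the increment
  set a0 := max (R + 2) ((n : ℝ) + 2) with ha0_def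
  have ha0R : R < a0 := lt_of_lt_of_le (by linarith) (le_max_left _ _)
  have ha0pos : 0 < a0 := lt_trans hR ha0R
  have hiter : ∀ k : ℕ, U a0 + k * (c / 4) ≤ U ((2 : ℝ) ^ k * a0) := by
    intro k
    induction k with
    | zero => simp
    | succ k ih =>
      have hk1 : (1 : ℝ) ≤ 2 ^ k := one_le_pow₀ (by norm_num)
      have hka : a0 ≤ 2 ^ k * a0 := le_mul_of_one_le_left ha0pos.le hk1
      have := key ((2 : ℝ) ^ k * a0) hka
      have heq2 : (2 : ℝ) ^ (k + 1) * a0 = 2 * ((2 : ℝ) ^ k * a0) := by ring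
      rw [heq2]
      push_cast
      linarith
  obtain ⟨k, hk⟩ := exists_nat_gt ((M - U a0) / (c / 4))
  have hk2 : M - U a0 < k * (c / 4) := by
    rw [div_lt_iff₀ (by linarith)] at hk
    linarith
  have hk3 : (2 : ℝ) ^ k * a0 ∈ Set.Ioi R := by
    have hk1 : (1 : ℝ) ≤ 2 ^ k := one_le_pow₀ (by norm_num)
    have : a0 ≤ 2 ^ k * a0 := le_mul_of_one_le_left ha0pos.le hk1
    simp only [Set.mem_Ioi]; linarith
  linarith [hiter k, hM _ hk3]
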